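/- Let {V_h, h ≥ 1} be independent Beta(1, M/J)-distributed random variables, and define stick-breaking weights π_h = V_h ∏_{i<h}(1 − V_i). Then for any H ≥ 1 and ε ∈ (0,1), Pr(Σ_{h>H} π_h > ε) = Pr(∏_{i=1}^{H}(1 − V_i) > ε) ≤ {−(M/J) log ε}^H / Γ(H+1). -/

import Mathlib

open MeasureTheory ProbabilityTheory

/-- The pdf of the Beta distribution with parameters `a`, `b`. -/
noncomputable def betaPDFReal (a b x : ℝ) : ℝ :=
  if 0 < x ∧ x < 1 then
    Real.Gamma (a + b) / (Real.Gamma a * Real.Gamma b) * x ^ (a - 1) * (1 - x) ^ (b - 1)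
  else 0

/-- The Beta measure with parameters `a`, `b`. -/
noncomputable def betaMeasure (a b : ℝ) : Measure ℝ :=
  volume.withDensity (fun x => ENNReal.ofReal (_root_.betaPDFReal a b x))

/-- our "nice" density for 1 - V -/
noncomputable def sbD (c w : ℝ) : ℝ :=
  if 0 < w ∧ w < 1 then c * Real.exp (Real.log w * (c - 1)) else 0

lemma sb_Ioo_meas : MeasurableSet {w : ℝ | 0 < w ∧ w < 1} := by
  have : {w : ℝ | 0 < w ∧ w < 1} = Set.Ioo 0 1 := rfl
  rw [this]; exact measurableSet_Ioo

lemma sb_dW_meas (c : ℝ) : Measurable (fun w : ℝ => ENNReal.ofReal (sbD c w)) := by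
  apply Measurable.ennreal_ofReal
  exact Measurable.ite sb_Ioo_meas
    (((Real.measurable_log.mul measurable_const).exp).const_mul c) measurable_const

lemma sbD_eq_on (c w : ℝ) (hw : 0 < w) (hw1 : w < 1) :
    sbD c w = c * w ^ (c - 1) := by
  rw [sbD, if_pos ⟨hw, hw1⟩, Real.rpow_def_of_pos hw]

lemma sb_measurePreserving : MeasurePreserving (fun x : ℝ => 1 - x) volume volume := by
  have h1 : MeasurePreserving (fun x : ℝ => -x) volume volume :=
    Measure.measurePreserving_neg volume
  have h2 : MeasurePreserving (fun x : ℝ => 1 + x) volume volume :=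
    measurePreserving_add_left volume 1
  have heq : (fun x : ℝ => 1 - x) = (fun x : ℝ => 1 + x) ∘ (fun x : ℝ => -x) := by
    funext x; simp [sub_eq_add_neg, Function.comp]
  rw [heq]; exact h2.comp h1

lemma sb_map_one_sub {c : ℝ} (hc : 0 < c) :
    Measure.map (fun x : ℝ => 1 - x) (_root_.betaMeasure 1 c)
      = volume.withDensity (fun w => ENNReal.ofReal (sbD c w)) := by
  have hmp := sb_measurePreserving
  have hmeas1 : Measurable (fun x : ℝ => 1 - x) := measurable_const.sub measurable_id
  have hpt : ∀ x : ℝ, ENNReal.ofReal (_root_.betaPDFReal 1 c x)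
      = (fun w : ℝ => ENNReal.ofReal (sbD c w)) (1 - x) := by
    intro x
    simp only [_root_.betaPDFReal, sbD]
    have hcond : (0 < (1:ℝ) - x ∧ (1:ℝ) - x < 1) ↔ (0 < x ∧ x < 1) := by constructor <;>
      (rintro ⟨h1, h2⟩; constructor <;> linarith)
    by_cases hx : 0 < x ∧ x < 1
    · rw [if_pos hx, if_pos (hcond.2 hx)]
      have hG : Real.Gamma (1 + c) / (Real.Gamma 1 * Real.Gamma c) = c := by
        rw [add_comm, Real.Gamma_add_one hc.ne', Real.Gamma_one, one_mul, mul_div_assoc,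
          div_self (Real.Gamma_pos_of_pos hc).ne', mul_one]
      rw [hG, Real.rpow_def_of_pos (show (0:ℝ) < 1 - x by linarith [hx.2])]
      norm_num
    · rw [if_neg hx, if_neg (fun h => hx (hcond.1 h))]
  ext s hs
  rw [Measure.map_apply hmeas1 hs, _root_.betaMeasure, withDensity_apply _ (hmeas1 hs),
    withDensity_apply _ hs]
  calc ∫⁻ x in (fun x : ℝ => 1 - x) ⁻¹' s, ENNReal.ofReal (_root_.betaPDFReal 1 c x)
      = ∫⁻ x in (fun x : ℝ => 1 - x) ⁻¹' s,
          (fun w : ℝ => ENNReal.ofReal (sbD c w)) ((fun x : ℝ => 1 - x) x) := by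
        exact setLIntegral_congr_fun ((hmeas1 hs)) (fun x _ => hpt x)
    _ = ∫⁻ w in s, ENNReal.ofReal (sbD c w) := hmp.setLIntegral_comp_preimage hs (sb_dW_meas c)

/-- density vanishes outside (0,1), so the law is carried by (0,1) -/
lemma sb_withDensity_compl_zero (c : ℝ) :
    (volume.withDensity (fun w => ENNReal.ofReal (sbD c w))) (Set.Ioo (0:ℝ) 1)ᶜ = 0 := by
  rw [withDensity_apply _ measurableSet_Ioo.compl]
  have : ∀ w ∈ (Set.Ioo (0:ℝ) 1)ᶜ, ENNReal.ofReal (sbD c w) = 0 := by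
    intro w hw
    have : ¬ (0 < w ∧ w < 1) := by simpa [Set.mem_Ioo] using hw
    simp [sbD, this]
  rw [setLIntegral_congr_fun measurableSet_Ioo.compl this]
  simp

lemma sb_beta_compl_zero (a b : ℝ) : (_root_.betaMeasure a b) (Set.Ioo (0:ℝ) 1)ᶜ = 0 := by
  rw [_root_.betaMeasure, withDensity_apply _ measurableSet_Ioo.compl]
  have : ∀ w ∈ (Set.Ioo (0:ℝ) 1)ᶜ, ENNReal.ofReal (_root_.betaPDFReal a b w) = 0 := by
    intro w hw
    have : ¬ (0 < w ∧ w < 1) := by simpa [Set.mem_Ioo] using hw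
    simp [_root_.betaPDFReal, this]
  rw [setLIntegral_congr_fun measurableSet_Ioo.compl this]
  simp

lemma sb_key {Ω : Type*} [MeasurableSpace Ω] (μ : Measure Ω) [IsProbabilityMeasure μ]
    {c : ℝ} (hc : 0 < c)
    (V : ℕ → Ω → ℝ) (hVmeas : ∀ h, Measurable (V h))
    (hindep : iIndepFun V μ)
    (hlaw : ∀ h, Measure.map (V h) μ = _root_.betaMeasure 1 c) :
    ∀ n : ℕ, ∀ e : ℝ, 0 < e → e < 1 →
      μ {ω | e < ∏ i ∈ Finset.range n, (1 - V i ω)}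
        ≤ ENNReal.ofReal ((c * (-Real.log e)) ^ n / (n.factorial : ℝ)) := by
  set W : ℕ → Ω → ℝ := fun i ω => 1 - V i ω with hW
  have hWmeas : ∀ i, Measurable (W i) := fun i => measurable_const.sub (hVmeas i)
  have hWindep : iIndepFun W μ :=
    hindep.comp (fun _ => fun x : ℝ => 1 - x) (fun _ => measurable_const.sub measurable_id)
  have hWlaw : ∀ i, Measure.map (W i) μ
      = volume.withDensity (fun w => ENNReal.ofReal (sbD c w)) := by
    intro i
    have h1 : W i = (fun x : ℝ => 1 - x) ∘ V i := rfl
    rw [h1, ← Measure.map_map (show Measurable fun x : ℝ => 1 - x from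
      measurable_const.sub measurable_id) (hVmeas i), hlaw i, sb_map_one_sub hc]
  have hXmeas : ∀ n : ℕ, Measurable (fun ω => ∏ i ∈ Finset.range n, (1 - V i ω)) :=
    fun n => Finset.measurable_prod _ (fun i _ => measurable_const.sub (hVmeas i))
  have hV01 : ∀ᵐ ω ∂μ, ∀ i, V i ω ∈ Set.Ioo (0:ℝ) 1 := by
    rw [ae_all_iff]
    intro i
    have h0 : μ (V i ⁻¹' (Set.Ioo (0:ℝ) 1)ᶜ) = 0 := by
      rw [← Measure.map_apply (hVmeas i) measurableSet_Ioo.compl, hlaw i]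
      exact sb_beta_compl_zero 1 c
    filter_upwards [measure_eq_zero_iff_ae_notMem.1 h0] with ω hω
    simpa using hω
  have hXle1 : ∀ n : ℕ, μ {ω | (1:ℝ) < ∏ i ∈ Finset.range n, (1 - V i ω)} = 0 := by
    intro n
    have hb : ∀ᵐ ω ∂μ, ∏ i ∈ Finset.range n, (1 - V i ω) ≤ 1 := by
      filter_upwards [hV01] with ω h01
      exact Finset.prod_le_one (fun i _ => by have := (h01 i).2; linarith)
        (fun i _ => by have := (h01 i).1; linarith)
    have := ae_iff.1 hb
    simpa [not_le] using this
  have hIndepWX : ∀ n : ℕ,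
      IndepFun (W n) (fun ω => ∏ i ∈ Finset.range n, (1 - V i ω)) μ := by
    intro n
    have h1 := hWindep.indepFun_prod_range_succ hWmeas n
    have heq : (∏ j ∈ Finset.range n, W j) = fun ω => ∏ i ∈ Finset.range n, (1 - V i ω) := by
      funext ω; simp [hW]
    rw [heq] at h1
    exact h1.symm
  intro n
  induction n with
  | zero =>
    intro e he he1
    have huniv : {ω : Ω | e < ∏ i ∈ Finset.range 0, (1 - V i ω)} = Set.univ := by
      apply Set.eq_univ_of_forall
      intro ω; simpa using he1
    rw [huniv, measure_univ]
    simp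
  | succ n ih =>
    intro e he he1
    haveI : IsProbabilityMeasure (μ.map (W n)) := Measure.isProbabilityMeasure_map (hWmeas n).aemeasurable
    haveI : IsProbabilityMeasure (μ.map (fun ω => ∏ i ∈ Finset.range n, (1 - V i ω))) :=
      Measure.isProbabilityMeasure_map (hXmeas n).aemeasurable
    have hsetm : MeasurableSet {p : ℝ × ℝ | e < p.2 * p.1} :=
      measurableSet_lt measurable_const (measurable_snd.mul measurable_fst)
    have hev : {ω : Ω | e < ∏ i ∈ Finset.range (n+1), (1 - V i ω)}
        = (fun ω => (W n ω, ∏ i ∈ Finset.range n, (1 - V i ω))) ⁻¹' {p : ℝ × ℝ | e < p.2 * p.1} := by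
      ext ω
      simp only [Set.mem_setOf_eq, Set.mem_preimage, Finset.prod_range_succ]
      exact Iff.rfl
    -- a.e. w ∈ (0,1) under law of W n
    have hW01 : ∀ᵐ w ∂(μ.map (W n)), w ∈ Set.Ioo (0:ℝ) 1 := by
      rw [hWlaw n]
      filter_upwards [measure_eq_zero_iff_ae_notMem.1 (sb_withDensity_compl_zero c)] with w hw
      simpa using hw
    have hφmeas : Measurable ((Set.Ioo e 1).indicator
        (fun w => ENNReal.ofReal ((c * (Real.log w - Real.log e)) ^ n / (n.factorial : ℝ)))) := by
      refine Measurable.indicator ?_ measurableSet_Ioo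
      exact ((((Real.measurable_log.sub measurable_const).const_mul c).pow_const n).div_const
        _).ennreal_ofReal
    calc μ {ω | e < ∏ i ∈ Finset.range (n+1), (1 - V i ω)}
        = ((μ.map (W n)).prod (μ.map (fun ω => ∏ i ∈ Finset.range n, (1 - V i ω))))
            {p : ℝ × ℝ | e < p.2 * p.1} := by
          rw [hev, ← Measure.map_apply ((hWmeas n).prodMk (hXmeas n)) hsetm,
            (indepFun_iff_map_prod_eq_prod_map_map (hWmeas n).aemeasurable
              (hXmeas n).aemeasurable).1 (hIndepWX n)]
      _ = ∫⁻ w, (μ.map (fun ω => ∏ i ∈ Finset.range n, (1 - V i ω)))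
            (Prod.mk w ⁻¹' {p : ℝ × ℝ | e < p.2 * p.1}) ∂(μ.map (W n)) :=
          Measure.prod_apply hsetm
      _ ≤ ∫⁻ w, (Set.Ioo e 1).indicator
            (fun w => ENNReal.ofReal ((c * (Real.log w - Real.log e)) ^ n / (n.factorial : ℝ))) w
            ∂(μ.map (W n)) := by
          apply lintegral_mono_ae
          filter_upwards [hW01] with w hw
          have hslice : Prod.mk w ⁻¹' {p : ℝ × ℝ | e < p.2 * p.1} = {x : ℝ | e < x * w} := rfl
          rcases le_or_gt w e with hwe | hew
          · -- slice is null
            have hsub : {x : ℝ | e < x * w} ⊆ Set.Ioi 1 := by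
              intro x hx
              by_contra hx1
              rw [Set.mem_Ioi, not_lt] at *
              have : x * w ≤ w := by
                calc x * w ≤ 1 * w := mul_le_mul_of_nonneg_right hx1 hw.1.le
                  _ = w := one_mul w
              have := hx.out
              simp only [Set.mem_setOf_eq] at hx
              linarith
            have h0 : (μ.map (fun ω => ∏ i ∈ Finset.range n, (1 - V i ω))) (Set.Ioi 1) = 0 := by
              rw [Measure.map_apply (hXmeas n) measurableSet_Ioi]
              exact hXle1 n
            rw [hslice]
            refine le_trans (le_trans (measure_mono hsub) (le_of_eq h0)) zero_le
          · -- e < w < 1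
            have hIoi : {x : ℝ | e < x * w} = Set.Ioi (e / w) := by
              ext x
              simp only [Set.mem_setOf_eq, Set.mem_Ioi]
              exact (div_lt_iff₀ hw.1).symm
            rw [hslice, hIoi, Measure.map_apply (hXmeas n) measurableSet_Ioi]
            have hd1 : 0 < e / w := div_pos he hw.1
            have hd2 : e / w < 1 := (div_lt_one hw.1).2 hew
            refine le_trans (ih (e / w) hd1 hd2) (le_of_eq ?_)
            have hmem : w ∈ Set.Ioo e 1 := ⟨hew, hw.2⟩
            rw [Set.indicator_of_mem hmem]
            have hlog : c * (-Real.log (e / w)) = c * (Real.log w - Real.log e) := by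
              rw [Real.log_div he.ne' hw.1.ne']; ring
            rw [hlog]
      _ = ∫⁻ w in Set.Ioo e 1, ENNReal.ofReal (sbD c w)
            * ENNReal.ofReal ((c * (Real.log w - Real.log e)) ^ n / (n.factorial : ℝ)) ∂volume := by
          rw [hWlaw n, lintegral_withDensity_eq_lintegral_mul _ (sb_dW_meas c) hφmeas]
          have heq2 : (fun w => ((fun w => ENNReal.ofReal (sbD c w))
              * (Set.Ioo e 1).indicator
                (fun w => ENNReal.ofReal ((c * (Real.log w - Real.log e)) ^ n / (n.factorial : ℝ)))) w)
              = (Set.Ioo e 1).indicator (fun w => ENNReal.ofReal (sbD c w)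
                * ENNReal.ofReal ((c * (Real.log w - Real.log e)) ^ n / (n.factorial : ℝ))) := by
            funext w
            by_cases hmem : w ∈ Set.Ioo e 1 <;> simp [hmem]
          rw [heq2, lintegral_indicator measurableSet_Ioo]
      _ ≤ ∫⁻ w in Set.Ioo e 1, ENNReal.ofReal
            ((c * (Real.log w - Real.log e)) ^ n / (n.factorial : ℝ) * (c / w)) ∂volume := by
          apply setLIntegral_mono
          · exact (((((Real.measurable_log.sub measurable_const).const_mul c).pow_const n).div_const
              _).mul (measurable_const.div measurable_id)).ennreal_ofReal
          intro w hw
          have hw0 : 0 < w := lt_trans he hw.1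
          rw [sbD_eq_on c w hw0 hw.2, ← ENNReal.ofReal_mul (by positivity)]
          apply ENNReal.ofReal_le_ofReal
          have hrp : w ^ (c - 1) ≤ w⁻¹ := by
            rw [Real.rpow_sub hw0, Real.rpow_one, div_le_iff₀ hw0,
              inv_mul_cancel₀ hw0.ne']
            exact Real.rpow_le_one hw0.le hw.2.le hc.le
          have hA : 0 ≤ (c * (Real.log w - Real.log e)) ^ n / (n.factorial : ℝ) := by
            have hlw : 0 ≤ Real.log w - Real.log e :=
              sub_nonneg.2 (Real.log_le_log he hw.1.le)
            positivity
          refine le_trans (mul_le_mul_of_nonneg_right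
            (mul_le_mul_of_nonneg_left hrp hc.le) hA) (le_of_eq ?_)
          rw [div_eq_mul_inv]; ring
      _ = ENNReal.ofReal (∫ w in Set.Ioo e 1,
            ((c * (Real.log w - Real.log e)) ^ n / (n.factorial : ℝ) * (c / w)) ∂volume) := by
          have hcont : ContinuousOn (fun w : ℝ =>
              (c * (Real.log w - Real.log e)) ^ n / (n.factorial : ℝ) * (c / w))
              (Set.Icc e 1) := by
            have hne : ∀ x ∈ Set.Icc e (1:ℝ), x ≠ 0 :=
              fun x hx => (lt_of_lt_of_le he hx.1).ne'
            have hlogc : ContinuousOn Real.log (Set.Icc e 1) :=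
              Real.continuousOn_log.mono (fun x hx => hne x hx)
            exact (((continuousOn_const.mul (hlogc.sub continuousOn_const)).pow n).div_const
              _).mul (continuousOn_const.div continuousOn_id hne)
          have hint : IntegrableOn (fun w : ℝ =>
              (c * (Real.log w - Real.log e)) ^ n / (n.factorial : ℝ) * (c / w))
              (Set.Ioo e 1) volume :=
            (hcont.integrableOn_Icc).mono_set Set.Ioo_subset_Icc_self
          have hnn : 0 ≤ᵐ[volume.restrict (Set.Ioo e 1)] (fun w : ℝ =>
              (c * (Real.log w - Real.log e)) ^ n / (n.factorial : ℝ) * (c / w)) := by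
            filter_upwards [ae_restrict_mem measurableSet_Ioo] with w hw
            have hw0 : 0 < w := lt_trans he hw.1
            have hlw : 0 ≤ Real.log w - Real.log e :=
              sub_nonneg.2 (Real.log_le_log he hw.1.le)
            positivity
          exact (ofReal_integral_eq_lintegral_ofReal hint hnn).symm
      _ ≤ ENNReal.ofReal ((c * (-Real.log e)) ^ (n+1) / ((n+1).factorial : ℝ)) := by
          apply ENNReal.ofReal_le_ofReal
          apply le_of_eq
          rw [← integral_Ioc_eq_integral_Ioo, ← intervalIntegral.integral_of_le he1.le]
          have hderiv : ∀ w ∈ Set.uIcc e (1:ℝ), HasDerivAt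
              (fun w : ℝ => (c * (Real.log w - Real.log e)) ^ (n+1) / ((n+1).factorial : ℝ))
              ((c * (Real.log w - Real.log e)) ^ n / (n.factorial : ℝ) * (c / w)) w := by
            intro w hw
            rw [Set.uIcc_of_le he1.le] at hw
            have hw0 : 0 < w := lt_of_lt_of_le he hw.1
            have h1 : HasDerivAt (fun w : ℝ => c * (Real.log w - Real.log e)) (c * w⁻¹) w := by
              simpa using (((Real.hasDerivAt_log hw0.ne').sub_const (Real.log e)).const_mul c)
            have h2 := (h1.pow (n+1)).div_const (((n+1).factorial : ℝ))
            have hfact : (((n+1).factorial : ℝ)) = ((n+1 : ℕ) : ℝ) * (n.factorial : ℝ) := by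
              rw [Nat.factorial_succ]; push_cast; ring
            refine h2.congr_deriv ?_
            rw [hfact, Nat.add_sub_cancel]
            have hnf : (n.factorial : ℝ) ≠ 0 := Nat.cast_ne_zero.2 n.factorial_ne_zero
            have hn1 : ((n+1 : ℕ) : ℝ) ≠ 0 := Nat.cast_ne_zero.2 (Nat.succ_ne_zero n)
            field_simp
          have hii : IntervalIntegrable (fun w : ℝ =>
              (c * (Real.log w - Real.log e)) ^ n / (n.factorial : ℝ) * (c / w)) volume e 1 := by
            apply ContinuousOn.intervalIntegrable
            rw [Set.uIcc_of_le he1.le]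
            have hne : ∀ x ∈ Set.Icc e (1:ℝ), x ≠ 0 :=
              fun x hx => (lt_of_lt_of_le he hx.1).ne'
            have hlogc : ContinuousOn Real.log (Set.Icc e 1) :=
              Real.continuousOn_log.mono (fun x hx => hne x hx)
            exact (((continuousOn_const.mul (hlogc.sub continuousOn_const)).pow n).div_const
              _).mul (continuousOn_const.div continuousOn_id hne)
          rw [intervalIntegral.integral_eq_sub_of_hasDerivAt hderiv hii]
          simp [Real.log_one, zero_sub, sub_self, mul_zero,
            zero_pow (Nat.succ_ne_zero n), zero_div]

/-- Stick-breaking tail bound: for independent `V_h ~ Beta(1, M/J)` and stick-breaking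
weights `π_h = V_h ∏_{i<h} (1−V_i)`,
`Pr(Σ_{h>H} π_h > ε) = Pr(∏_{i≤H}(1−V_i) > ε) ≤ {−(M/J) log ε}^H / Γ(H+1)`. -/
theorem stick_breaking_tail {Ω : Type*} [MeasurableSpace Ω]
    (μ : Measure Ω) [IsProbabilityMeasure μ]
    (M J : ℝ) (hM : 0 < M) (hJ : 1 ≤ J)
    (V : ℕ → Ω → ℝ) (hVmeas : ∀ h, Measurable (V h))
    (hindep : iIndepFun V μ)
    (hlaw : ∀ h, Measure.map (V h) μ = _root_.betaMeasure 1 (M / J))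
    (π : ℕ → Ω → ℝ)
    (hπ : ∀ h ω, π h ω = V h ω * ∏ i ∈ Finset.range h, (1 - V i ω))
    (H : ℕ) (hH : 1 ≤ H) (ε : ℝ) (hε : 0 < ε) (hε1 : ε < 1) :
    (μ {ω | ε < ∑' h : ℕ, π (H + h) ω}).toReal
        = (μ {ω | ε < ∏ i ∈ Finset.range H, (1 - V i ω)}).toReal ∧
    (μ {ω | ε < ∑' h : ℕ, π (H + h) ω}).toReal
        ≤ (-(M / J) * Real.log ε) ^ H / (Nat.factorial H : ℝ) := by
  have hc : 0 < M / J := div_pos hM (lt_of_lt_of_le one_pos hJ)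
  have key := sb_key μ hc V hVmeas hindep hlaw
  have hV01 : ∀ᵐ ω ∂μ, ∀ i, V i ω ∈ Set.Ioo (0:ℝ) 1 := by
    rw [ae_all_iff]
    intro i
    have h0 : μ (V i ⁻¹' (Set.Ioo (0:ℝ) 1)ᶜ) = 0 := by
      rw [← Measure.map_apply (hVmeas i) measurableSet_Ioo.compl, hlaw i]
      exact sb_beta_compl_zero 1 (M / J)
    filter_upwards [measure_eq_zero_iff_ae_notMem.1 h0] with ω hω
    simpa using hω
  -- a.s. the product tends to zero
  have htend : ∀ᵐ ω ∂μ, Filter.Tendsto (fun n => ∏ i ∈ Finset.range n, (1 - V i ω))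
      Filter.atTop (nhds 0) := by
    have hBad : ∀ k : ℕ,
        μ (⋂ n, {ω | (1:ℝ)/((k:ℝ)+2) < ∏ i ∈ Finset.range n, (1 - V i ω)}) = 0 := by
      intro k
      have hδ0 : 0 < (1:ℝ)/((k:ℝ)+2) := by positivity
      have hδ1 : (1:ℝ)/((k:ℝ)+2) < 1 := by
        rw [div_lt_one (by positivity)]
        have : (0:ℝ) ≤ (k:ℝ) := Nat.cast_nonneg k
        linarith
      have hbound : ∀ n : ℕ,
          μ (⋂ m, {ω | (1:ℝ)/((k:ℝ)+2) < ∏ i ∈ Finset.range m, (1 - V i ω)})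
            ≤ ENNReal.ofReal (((M/J) * (-Real.log ((1:ℝ)/((k:ℝ)+2)))) ^ n / (n.factorial : ℝ)) :=
        fun n => le_trans (measure_mono (Set.iInter_subset _ n)) (key n _ hδ0 hδ1)
      have htend0 : Filter.Tendsto
          (fun n : ℕ => ENNReal.ofReal (((M/J) * (-Real.log ((1:ℝ)/((k:ℝ)+2)))) ^ n
            / (n.factorial : ℝ))) Filter.atTop (nhds 0) := by
        have h1 := FloorSemiring.tendsto_pow_div_factorial_atTop
          ((M/J) * (-Real.log ((1:ℝ)/((k:ℝ)+2))))
        have h2 := ENNReal.tendsto_ofReal h1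
        simpa using h2
      exact nonpos_iff_eq_zero.1 (ge_of_tendsto' htend0 hbound)
    have hU : μ (⋃ k : ℕ,
        ⋂ n, {ω | (1:ℝ)/((k:ℝ)+2) < ∏ i ∈ Finset.range n, (1 - V i ω)}) = 0 :=
      measure_iUnion_null hBad
    filter_upwards [hV01, measure_eq_zero_iff_ae_notMem.1 hU] with ω h01 hnm
    have hfnn : ∀ n : ℕ, 0 ≤ ∏ i ∈ Finset.range n, (1 - V i ω) :=
      fun n => Finset.prod_nonneg fun i _ => by have := (h01 i).2; linarith
    have hant : Antitone (fun n => ∏ i ∈ Finset.range n, (1 - V i ω)) := by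
      apply antitone_nat_of_succ_le
      intro n
      rw [Finset.prod_range_succ]
      have h1 : 1 - V n ω ≤ 1 := by have := (h01 n).1; linarith
      exact mul_le_of_le_one_right (hfnn n) h1
    have hbdd : BddBelow (Set.range (fun n => ∏ i ∈ Finset.range n, (1 - V i ω))) := by
      refine ⟨0, ?_⟩
      rintro x ⟨n, rfl⟩
      exact hfnn n
    have hinf := tendsto_atTop_ciInf hant hbdd
    have hinf0 : (⨅ n, ∏ i ∈ Finset.range n, (1 - V i ω)) = 0 := by
      have hge : 0 ≤ ⨅ n, ∏ i ∈ Finset.range n, (1 - V i ω) := le_ciInf hfnn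
      have hle : ∀ k : ℕ, (⨅ n, ∏ i ∈ Finset.range n, (1 - V i ω)) ≤ 1/((k:ℝ)+2) := by
        intro k
        have hnot : ω ∉ ⋂ n, {ω | (1:ℝ)/((k:ℝ)+2) < ∏ i ∈ Finset.range n, (1 - V i ω)} :=
          fun hmem => hnm (Set.mem_iUnion.2 ⟨k, hmem⟩)
        rw [Set.mem_iInter] at hnot
        push_neg at hnot
        obtain ⟨n, hn⟩ := hnot
        simp only [Set.mem_setOf_eq, not_lt] at hn
        exact le_trans (ciInf_le hbdd n) hn
      refine le_antisymm ?_ hge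
      by_contra hpos
      push_neg at hpos
      obtain ⟨m, hm⟩ := exists_nat_one_div_lt hpos
      have h12 : (1:ℝ)/((m:ℝ)+2) ≤ 1/((m:ℝ)+1) := by
        apply one_div_le_one_div_of_le (by positivity)
        linarith
      have := hle m
      linarith
    rw [hinf0] at hinf
    exact hinf
  -- a.e. identification of the tail sum with the partial product
  have htsum : ∀ᵐ ω ∂μ, (∑' h : ℕ, π (H + h) ω) = ∏ i ∈ Finset.range H, (1 - V i ω) := by
    filter_upwards [hV01, htend] with ω h01 htd
    have hfnn : ∀ n : ℕ, 0 ≤ ∏ i ∈ Finset.range n, (1 - V i ω) :=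
      fun n => Finset.prod_nonneg fun i _ => by have := (h01 i).2; linarith
    have hnn : ∀ h : ℕ, 0 ≤ π (H + h) ω := by
      intro h
      rw [hπ]
      exact mul_nonneg (by have := (h01 (H+h)).1; linarith) (hfnn _)
    have hpart : ∀ n : ℕ, (∑ h ∈ Finset.range n, π (H + h) ω)
        = (∏ i ∈ Finset.range H, (1 - V i ω)) - ∏ i ∈ Finset.range (H + n), (1 - V i ω) := by
      intro n
      have hcalc : (∑ h ∈ Finset.range n, π (H + h) ω)
          = ∑ h ∈ Finset.range n, ((fun h => ∏ i ∈ Finset.range (H + h), (1 - V i ω)) h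
            - (fun h => ∏ i ∈ Finset.range (H + h), (1 - V i ω)) (h + 1)) := by
        apply Finset.sum_congr rfl
        intro h _
        simp only
        rw [hπ]
        have hsucc : (∏ i ∈ Finset.range (H + (h + 1)), (1 - V i ω))
            = (∏ i ∈ Finset.range (H + h), (1 - V i ω)) * (1 - V (H + h) ω) := by
          have : H + (h + 1) = (H + h) + 1 := rfl
          rw [this, Finset.prod_range_succ]
        rw [hsucc]
        ring
      rw [hcalc, Finset.sum_range_sub' (fun h => ∏ i ∈ Finset.range (H + h), (1 - V i ω)) n]
      simp
    have hsummable : Summable (fun h => π (H + h) ω) := by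
      apply summable_of_sum_range_le (c := ∏ i ∈ Finset.range H, (1 - V i ω)) hnn
      intro n
      rw [hpart n]
      have := hfnn (H + n)
      linarith
    have h2 : Filter.Tendsto (fun n => ∏ i ∈ Finset.range (H + n), (1 - V i ω))
        Filter.atTop (nhds 0) := by
      have h3 := htd.comp (Filter.tendsto_add_atTop_nat H)
      have h4 : (fun n => ∏ i ∈ Finset.range (H + n), (1 - V i ω))
          = (fun n => ∏ i ∈ Finset.range (n + H), (1 - V i ω)) := by
        funext n; rw [Nat.add_comm]
      rw [h4]
      exact h3
    have ht1 : Filter.Tendsto (fun n => ∑ h ∈ Finset.range n, π (H + h) ω)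
        Filter.atTop (nhds (∏ i ∈ Finset.range H, (1 - V i ω))) := by
      rw [show (fun n => ∑ h ∈ Finset.range n, π (H + h) ω)
        = fun n => (∏ i ∈ Finset.range H, (1 - V i ω))
            - ∏ i ∈ Finset.range (H + n), (1 - V i ω) from funext hpart]
      simpa using tendsto_const_nhds.sub h2
    exact tendsto_nhds_unique hsummable.hasSum.tendsto_sum_nat ht1
  have hμeq : μ {ω | ε < ∑' h : ℕ, π (H + h) ω}
      = μ {ω | ε < ∏ i ∈ Finset.range H, (1 - V i ω)} := by
    apply measure_congr
    rw [Filter.eventuallyEq_set]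
    filter_upwards [htsum] with ω h
    simp only [Set.mem_setOf_eq, h]
  constructor
  · rw [hμeq]
  · rw [hμeq]
    have hb := key H ε hε hε1
    have hlognn : 0 ≤ -Real.log ε := neg_nonneg.2 (Real.log_nonpos hε.le hε1.le)
    have hnn : 0 ≤ ((M/J) * (-Real.log ε)) ^ H / (H.factorial : ℝ) := by positivity
    have hres := ENNReal.toReal_le_of_le_ofReal hnn hb
    have harg : (-(M / J) * Real.log ε) = (M/J) * (-Real.log ε) := by ring
    rw [harg]
    exact hres
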